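/- (Energy barrier near an almost-critical point, Proposition 3.) Assume the C³ setting. Suppose η₃ > (3/2)η₁* is a real number such that 3ā(v,η₃)·η₃ ≤ 2b(v) for every unit vector v. Then every q ∈ ℝⁿ with (3/2)η₁* < |q − p| ≤ η₃ satisfies H(q) − H(p) ≥ (λ/3)|q − p|²(1 − (3/2)η₁*/|q − p|) > 0. Moreover, if the strong discriminant condition (max over unit v of |c(v)|/b(v)) · (max over unit v of ā(v,(3/2)η₁*)/b(v)) < 2/9 holds, then such a number η₃ > (3/2)η₁* exists. -/

import Mathlib

noncomputable section

/-- The `k`-th directional derivative `H^{(k)}|_q(v) = (d/dt)^k H(q + t v)` at `t = 0`. -/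
def dirDeriv {E : Type*} [NormedAddCommGroup E] [NormedSpace ℝ E]
    (H : E → ℝ) (k : ℕ) (q v : E) : ℝ :=
  iteratedDeriv k (fun t : ℝ => H (q + t • v)) 0

/-- `ā(v,r) = max_{|s| ≤ r} (1/6)|H'''|_{p+sv}(v)|`. -/
def thirdDerivMax {E : Type*} [NormedAddCommGroup E] [NormedSpace ℝ E]
    (H : E → ℝ) (p : E) (v : E) (r : ℝ) : ℝ :=
  sSup ((fun s : ℝ => (1 / 6) * |dirDeriv H 3 (p + s • v) v|) '' Set.Icc (-r) r)

namespace EnergyBarrierAux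

open Set

variable {E : Type*} [NormedAddCommGroup E] [NormedSpace ℝ E]
variable {F : Type*} [NormedAddCommGroup F] [NormedSpace ℝ F]

lemma fderiv_shift (g : E → F) (a x : E) :
    fderiv ℝ (fun y => g (a + y)) x = fderiv ℝ g (a + x) := by
  by_cases h : DifferentiableAt ℝ g (a + x)
  · have h2 : HasFDerivAt (fun y : E => a + y) (ContinuousLinearMap.id ℝ E) x :=
      (hasFDerivAt_id x).const_add a
    have := (h.hasFDerivAt.comp x h2).fderiv
    exact this
  · rw [fderiv_zero_of_not_differentiableAt h, fderiv_zero_of_not_differentiableAt]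
    intro hcontra
    apply h
    have h2 : DifferentiableAt ℝ (fun z : E => z - a) (a + x) :=
      differentiable_id.differentiableAt.sub_const a
    have hx : a + x - a = x := by abel
    have hcontra' : DifferentiableAt ℝ (fun y => g (a + y)) (a + x - a) := by rwa [hx]
    have h3 := hcontra'.comp (a + x) h2
    have hfun : (fun y : E => g (a + y)) ∘ (fun z : E => z - a) = g := by
      funext z; simp
    rwa [hfun] at h3

lemma iteratedFDeriv_shift (g : E → F) (a : E) (k : ℕ) (x : E) :
    iteratedFDeriv ℝ k (fun y => g (a + y)) x = iteratedFDeriv ℝ k g (a + x) := by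
  induction k generalizing x with
  | zero => ext m; simp
  | succ k IH =>
    ext m
    rw [iteratedFDeriv_succ_apply_left, iteratedFDeriv_succ_apply_left]
    have h1 : iteratedFDeriv ℝ k (fun y => g (a + y)) =
        fun y => iteratedFDeriv ℝ k g (a + y) := funext fun y => IH y
    rw [h1, fderiv_shift (iteratedFDeriv ℝ k g) a x]

lemma line_deriv_eq {H : E → ℝ} (hH : ContDiff ℝ 3 H) {k : ℕ} (hk : k ≤ 3)
    (q v : E) (s : ℝ) :
    iteratedDeriv k (fun t : ℝ => H (q + t • v)) s =
      iteratedFDeriv ℝ k H (q + s • v) (fun _ => v) := by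
  set L : ℝ →L[ℝ] E := (1 : ℝ →L[ℝ] ℝ).smulRight v with hL
  have hG : ContDiff ℝ 3 (fun y : E => H (q + y)) :=
    hH.comp (contDiff_const.add contDiff_id)
  have h1 : (fun t : ℝ => H (q + t • v)) = (fun y : E => H (q + y)) ∘ L := by
    funext t; simp [hL]
  rw [h1, iteratedDeriv_eq_iteratedFDeriv,
    L.iteratedFDeriv_comp_right hG s (by exact_mod_cast hk)]
  simp [ContinuousMultilinearMap.compContinuousLinearMap_apply,
    iteratedFDeriv_shift H q k, hL]

lemma dirDeriv_eq_fderiv {H : E → ℝ} (hH : ContDiff ℝ 3 H) {k : ℕ} (hk : k ≤ 3)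
    (q v : E) : dirDeriv H k q v = iteratedFDeriv ℝ k H q (fun _ => v) := by
  have := line_deriv_eq hH hk q v 0
  simpa [dirDeriv] using this

lemma my_iteratedDerivWithin_eq {f : ℝ → ℝ} {s : Set ℝ} (hs : UniqueDiffOn ℝ s)
    {m : ℕ} (hf : ContDiff ℝ 3 f) (hm : (m : ℕ) ≤ 3) {x : ℝ} (hx : x ∈ s) :
    iteratedDerivWithin m f s x = iteratedDeriv m f x := by
  have h1 : HasFTaylorSeriesUpToOn 3 f (ftaylorSeries ℝ f) s := by
    have h0 := (hf.contDiffOn (s := Set.univ)).ftaylorSeriesWithin uniqueDiffOn_univ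
    rw [ftaylorSeriesWithin_univ] at h0
    exact h0.mono (Set.subset_univ s)
  rw [iteratedDerivWithin_eq_iteratedFDerivWithin, iteratedDeriv_eq_iteratedFDeriv,
    ← h1.eq_iteratedFDerivWithin_of_uniqueDiffOn (by exact_mod_cast hm) hs hx]
  rfl

lemma taylor3 {f : ℝ → ℝ} (hf : ContDiff ℝ 3 f) {r : ℝ} (hr : 0 < r) :
    ∃ x' ∈ Set.Ioo 0 r, f r - f 0 = (iteratedDeriv 1 f 0) * r
      + ((1/2) * iteratedDeriv 2 f 0) * r ^ 2 + iteratedDeriv 3 f x' * r ^ 3 / 6 := by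
  have hs : UniqueDiffOn ℝ (Icc (0:ℝ) r) := uniqueDiffOn_Icc hr
  have hcd : ContDiffOn ℝ 2 f (Icc 0 r) := (hf.of_le (by norm_num)).contDiffOn
  have hdiff : DifferentiableOn ℝ (iteratedDerivWithin 2 f (Icc 0 r)) (Ioo 0 r) := by
    intro x hx
    have hmem : x ∈ Icc (0:ℝ) r := Ioo_subset_Icc_self hx
    have hd : DifferentiableAt ℝ (iteratedDeriv 2 f) x :=
      (hf.differentiable_iteratedDeriv 2 (by norm_num)).differentiableAt
    refine (hd.differentiableWithinAt).congr (fun y hy => ?_) ?_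
    · exact my_iteratedDerivWithin_eq hs hf (by norm_num) (Ioo_subset_Icc_self hy)
    · exact my_iteratedDerivWithin_eq hs hf (by norm_num) hmem
  obtain ⟨x', hx', h⟩ := taylor_mean_remainder_lagrange (n := 2) hr.ne
    (by rw [uIcc_of_le hr.le]; exact_mod_cast hcd)
    (by rw [uIcc_of_le hr.le, uIoo_of_le hr.le]; exact hdiff)
  rw [uIoo_of_le hr.le] at hx'
  rw [uIcc_of_le hr.le] at h
  refine ⟨x', hx', ?_⟩
  rw [taylor_within_apply] at h
  rw [my_iteratedDerivWithin_eq hs hf (by norm_num) (Ioo_subset_Icc_self hx')] at h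
  simp only [Finset.sum_range_succ, Finset.sum_range_zero] at h
  rw [my_iteratedDerivWithin_eq hs hf (by norm_num) (left_mem_Icc.mpr hr.le),
    my_iteratedDerivWithin_eq hs hf (by norm_num) (left_mem_Icc.mpr hr.le),
    my_iteratedDerivWithin_eq hs hf (by norm_num) (left_mem_Icc.mpr hr.le)] at h
  simp only [iteratedDeriv_zero] at h
  rw [iteratedDeriv_one]
  norm_num [Nat.factorial] at h
  linarith [h]

end EnergyBarrierAux

open EnergyBarrierAux Set

set_option maxHeartbeats 1600000 in
theorem energy_barrier_near_almost_critical (n : ℕ) (hn : 0 < n)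
    (H : EuclideanSpace ℝ (Fin n) → ℝ) (hH : ContDiff ℝ 3 H)
    (p : EuclideanSpace ℝ (Fin n)) (lam : ℝ) (hlam : 0 < lam)
    (b c : EuclideanSpace ℝ (Fin n) → ℝ)
    (hb : ∀ v, b v = (1 / 2) * dirDeriv H 2 p v)
    (hc : ∀ v, c v = dirDeriv H 1 p v)
    (hHess : ∀ v : EuclideanSpace ℝ (Fin n), ‖v‖ = 1 → 2 * lam ≤ dirDeriv H 2 p v)
    (η₁ : ℝ)
    (hη₁ : η₁ = sSup {x : ℝ | ∃ v : EuclideanSpace ℝ (Fin n), ‖v‖ = 1 ∧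
      x = 2 * |c v| / b v}) :
    (∀ η₃ : ℝ, (3 / 2) * η₁ < η₃ →
      (∀ v : EuclideanSpace ℝ (Fin n), ‖v‖ = 1 →
        3 * thirdDerivMax H p v η₃ * η₃ ≤ 2 * b v) →
      ∀ q : EuclideanSpace ℝ (Fin n), (3 / 2) * η₁ < ‖q - p‖ → ‖q - p‖ ≤ η₃ →
        (lam / 3) * ‖q - p‖ ^ 2 * (1 - (3 / 2) * η₁ / ‖q - p‖) ≤ H q - H p ∧
        0 < (lam / 3) * ‖q - p‖ ^ 2 * (1 - (3 / 2) * η₁ / ‖q - p‖)) ∧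
    ((sSup {x : ℝ | ∃ v : EuclideanSpace ℝ (Fin n), ‖v‖ = 1 ∧ x = |c v| / b v}) *
      (sSup {x : ℝ | ∃ v : EuclideanSpace ℝ (Fin n), ‖v‖ = 1 ∧
        x = thirdDerivMax H p v ((3 / 2) * η₁) / b v}) < 2 / 9 →
      ∃ η₃ : ℝ, (3 / 2) * η₁ < η₃ ∧
        ∀ v : EuclideanSpace ℝ (Fin n), ‖v‖ = 1 →
          3 * thirdDerivMax H p v η₃ * η₃ ≤ 2 * b v) := by
  classical
  -- a unit vector
  obtain ⟨v₀, hv₀⟩ : ∃ v : EuclideanSpace ℝ (Fin n), ‖v‖ = 1 :=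
    ⟨EuclideanSpace.single ⟨0, hn⟩ (1:ℝ), by simp [EuclideanSpace.norm_single]⟩
  have hdd : ∀ (k : ℕ), k ≤ 3 → ∀ (q v : EuclideanSpace ℝ (Fin n)),
      dirDeriv H k q v = iteratedFDeriv ℝ k H q (fun _ => v) :=
    fun k hk q v => dirDeriv_eq_fderiv hH hk q v
  have hbge : ∀ v, ‖v‖ = 1 → lam ≤ b v := by
    intro v hv; have := hHess v hv; rw [hb]; linarith
  have hbpos : ∀ v, ‖v‖ = 1 → 0 < b v := fun v hv => lt_of_lt_of_le hlam (hbge v hv)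
  have hc_bd : ∀ v, ‖v‖ = 1 → |c v| ≤ ‖iteratedFDeriv ℝ 1 H p‖ := by
    intro v hv
    rw [hc, hdd 1 (by norm_num)]
    have h1 := (iteratedFDeriv ℝ 1 H p).le_opNorm (fun _ => v)
    simpa [hv] using h1
  have hF3c : Continuous (iteratedFDeriv ℝ 3 H) := hH.continuous_iteratedFDeriv (le_refl _)
  have hcont3 : ∀ v : EuclideanSpace ℝ (Fin n),
      Continuous (fun s : ℝ => (1/6 : ℝ) * |dirDeriv H 3 (p + s • v) v|) := by
    intro v
    have h1 : Continuous (fun s : ℝ => iteratedFDeriv ℝ 3 H (p + s • v) (fun _ : Fin 3 => v)) :=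
      (continuous_eval_const _).comp
        (hF3c.comp (continuous_const.add (continuous_id.smul continuous_const)))
    have h2 : (fun s : ℝ => dirDeriv H 3 (p + s • v) v)
        = fun s : ℝ => iteratedFDeriv ℝ 3 H (p + s • v) (fun _ : Fin 3 => v) :=
      funext fun s => hdd 3 le_rfl _ v
    have h3 : Continuous (fun s : ℝ => dirDeriv H 3 (p + s • v) v) := by rw [h2]; exact h1
    exact continuous_const.mul h3.abs
  have hbdd3 : ∀ (v : EuclideanSpace ℝ (Fin n)) (ρ : ℝ),
      BddAbove ((fun s : ℝ => (1/6 : ℝ) * |dirDeriv H 3 (p + s • v) v|) '' Set.Icc (-ρ) ρ) :=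
    fun v ρ => (isCompact_Icc.image_of_continuousOn (hcont3 v).continuousOn).bddAbove
  have habarmem : ∀ (v : EuclideanSpace ℝ (Fin n)) (ρ s : ℝ), -ρ ≤ s → s ≤ ρ →
      (1/6 : ℝ) * |dirDeriv H 3 (p + s • v) v| ≤ thirdDerivMax H p v ρ :=
    fun v ρ s h1 h2 => le_csSup (hbdd3 v ρ) ⟨s, ⟨h1, h2⟩, rfl⟩
  have habar0 : ∀ (v : EuclideanSpace ℝ (Fin n)) (ρ : ℝ), 0 ≤ ρ → 0 ≤ thirdDerivMax H p v ρ :=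
    fun v ρ hρ => le_trans (by positivity) (habarmem v ρ 0 (neg_nonpos.2 hρ) hρ)
  have habarle : ∀ (v : EuclideanSpace ℝ (Fin n)) (ρ X : ℝ), 0 ≤ ρ →
      (∀ s : ℝ, -ρ ≤ s → s ≤ ρ → (1/6 : ℝ) * |dirDeriv H 3 (p + s • v) v| ≤ X) →
      thirdDerivMax H p v ρ ≤ X := by
    intro v ρ X hρ hall
    have hne : ((fun s : ℝ => (1/6 : ℝ) * |dirDeriv H 3 (p + s • v) v|) '' Set.Icc (-ρ) ρ).Nonempty :=
      ⟨_, Set.mem_image_of_mem _ (show (0:ℝ) ∈ Icc (-ρ) ρ from ⟨neg_nonpos.2 hρ, hρ⟩)⟩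
    refine csSup_le hne ?_
    rintro x ⟨s, hs, rfl⟩
    exact hall s hs.1 hs.2
  have hbddS : BddAbove {x : ℝ | ∃ v : EuclideanSpace ℝ (Fin n), ‖v‖ = 1 ∧
      x = 2 * |c v| / b v} := by
    refine ⟨2 * ‖iteratedFDeriv ℝ 1 H p‖ / lam, ?_⟩
    rintro x ⟨v, hv, rfl⟩
    exact div_le_div₀ (by positivity) (by linarith [hc_bd v hv]) hlam (hbge v hv)
  have hmemη₁ : ∀ v : EuclideanSpace ℝ (Fin n), ‖v‖ = 1 → 2 * |c v| / b v ≤ η₁ :=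
    fun v hv => hη₁ ▸ le_csSup hbddS ⟨v, hv, rfl⟩
  have hη₁0 : 0 ≤ η₁ :=
    le_trans (div_nonneg (by positivity) (hbpos v₀ hv₀).le) (hmemη₁ v₀ hv₀)
  constructor
  · -- Part 1
    intro η₃ hη₃ hbar q hq1 hq2
    have rpos : 0 < ‖q - p‖ := lt_of_le_of_lt (by positivity) hq1
    set r := ‖q - p‖ with hrdef
    set v : EuclideanSpace ℝ (Fin n) := r⁻¹ • (q - p) with hvdef
    have hv : ‖v‖ = 1 := by
      rw [hvdef, norm_smul, norm_inv, Real.norm_eq_abs, abs_of_pos rpos, ← hrdef]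
      field_simp
    have hq : p + r • v = q := by
      rw [hvdef, smul_smul, mul_inv_cancel₀ rpos.ne', one_smul]
      abel
    set φ : ℝ → ℝ := fun t => H (p + t • v) with hφdef
    have hφ : ContDiff ℝ 3 φ := hH.comp (contDiff_const.add (contDiff_id.smul contDiff_const))
    obtain ⟨x', hx', htay⟩ := taylor3 hφ rpos
    have h1 : iteratedDeriv 1 φ 0 = c v := by rw [hc]; rfl
    have h2 : iteratedDeriv 2 φ 0 = 2 * b v := by rw [hb]; simp [dirDeriv]; rfl
    have h3' : iteratedDeriv 3 φ x' = dirDeriv H 3 (p + x' • v) v := by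
      rw [hφdef, line_deriv_eq hH (le_refl 3) p v x', ← hdd 3 le_rfl]
    have hφr : φ r = H q := by rw [hφdef]; simp only; rw [hq]
    have hφ0 : φ 0 = H p := by simp [hφdef]
    have hη₃0 : 0 ≤ η₃ := le_trans (by positivity) hη₃.le
    set T := thirdDerivMax H p v η₃ with hTdef
    have hrem : (1/6 : ℝ) * |dirDeriv H 3 (p + x' • v) v| ≤ T :=
      habarmem v η₃ x' (le_trans (neg_nonpos.2 hη₃0) hx'.1.le) (le_trans hx'.2.le hq2)
    have hT0 : 0 ≤ T := habar0 v η₃ hη₃0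
    have hbar' : 3 * T * η₃ ≤ 2 * b v := hbar v hv
    have hcv : 2 * |c v| ≤ η₁ * b v := by
      have h := hmemη₁ v hv
      rw [div_le_iff₀ (hbpos v hv)] at h
      linarith
    have hbv := hbge v hv
    set R := dirDeriv H 3 (p + x' • v) v with hRdef
    have hmain : H q - H p = c v * r + b v * r ^ 2 + R * r ^ 3 / 6 := by
      rw [← hφr, ← hφ0, htay, h1, h2, h3']; ring
    have habs := abs_le.mp (show |R| ≤ 6 * T by linarith [abs_nonneg R])
    have hRlb : -(T * r ^ 3) ≤ R * r ^ 3 / 6 := by nlinarith [pow_pos rpos 3, habs.1]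
    have hTr : T * r ^ 3 ≤ (2/3) * b v * r ^ 2 := by
      nlinarith [mul_le_mul_of_nonneg_right (mul_le_mul_of_nonneg_left hq2 hT0) (sq_nonneg r),
        mul_le_mul_of_nonneg_right hbar' (sq_nonneg r)]
    have hcr : -(η₁ / 2 * b v * r) ≤ c v * r := by nlinarith [neg_abs_le (c v), rpos]
    have hrewrite : (lam / 3) * r ^ 2 * (1 - (3 / 2) * η₁ / r)
        = (lam / 3) * r ^ 2 - (lam / 2) * η₁ * r := by
      field_simp
    have e1 : (1/3) * b v * r ^ 2 - (η₁/2) * b v * r ≤ H q - H p := by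
      linarith [hcr, hRlb, hTr, hmain]
    have hr2 : η₁ * r / 2 ≤ r ^ 2 / 3 := by
      nlinarith [mul_lt_mul_of_pos_right hq1 rpos]
    have hkey : 0 ≤ (b v - lam) * (r ^ 2 / 3 - η₁ * r / 2) :=
      mul_nonneg (by linarith) (by linarith)
    constructor
    · rw [hrewrite]
      nlinarith [e1, hkey]
    · rw [hrewrite]
      nlinarith [hq1, rpos, hlam, mul_lt_mul_of_pos_right hq1 rpos]
  · -- Part 2
    intro hC
    set S₁ := {x : ℝ | ∃ v : EuclideanSpace ℝ (Fin n), ‖v‖ = 1 ∧ x = |c v| / b v} with hS₁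
    set A := (3/2 : ℝ) * η₁ with hAdef
    have hA0 : 0 ≤ A := by positivity
    set S₂ := {x : ℝ | ∃ v : EuclideanSpace ℝ (Fin n), ‖v‖ = 1 ∧
      x = thirdDerivMax H p v A / b v} with hS₂
    set C₁ := sSup S₁ with hC₁
    set C₂ := sSup S₂ with hC₂
    -- bounds on third derivative on ball
    set K := Metric.closedBall p (A + 1) with hKdef
    have hK : IsCompact K := isCompact_closedBall p _
    obtain ⟨M, hM⟩ : ∃ M : ℝ, ∀ x ∈ K, ‖iteratedFDeriv ℝ 3 H x‖ ≤ M := by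
      obtain ⟨M, hM⟩ := (hK.image_of_continuousOn (continuous_norm.comp hF3c).continuousOn).bddAbove
      exact ⟨M, fun x hx => hM (Set.mem_image_of_mem _ hx)⟩
    have hM0 : 0 ≤ M :=
      le_trans (norm_nonneg _) (hM p (Metric.mem_closedBall_self (by linarith)))
    have hmemK : ∀ (v : EuclideanSpace ℝ (Fin n)), ‖v‖ = 1 → ∀ s : ℝ, |s| ≤ A + 1 →
        p + s • v ∈ K := by
      intro v hv s hs
      rw [hKdef, Metric.mem_closedBall, dist_eq_norm]
      have : p + s • v - p = s • v := by abel
      rw [this, norm_smul, hv, Real.norm_eq_abs]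
      simpa using hs
    have hptw : ∀ (v : EuclideanSpace ℝ (Fin n)), ‖v‖ = 1 → ∀ s : ℝ, |s| ≤ A + 1 →
        (1/6 : ℝ) * |dirDeriv H 3 (p + s • v) v| ≤ M / 6 := by
      intro v hv s hs
      rw [hdd 3 le_rfl]
      have h1 := (iteratedFDeriv ℝ 3 H (p + s • v)).le_opNorm (fun _ => v)
      have h2 : |iteratedFDeriv ℝ 3 H (p + s • v) (fun _ => v)| ≤ M := by
        have h3 := hM _ (hmemK v hv s hs)
        rw [Real.norm_eq_abs] at h1
        calc |iteratedFDeriv ℝ 3 H (p + s • v) (fun _ => v)|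
            ≤ ‖iteratedFDeriv ℝ 3 H (p + s • v)‖ * ∏ _i : Fin 3, ‖v‖ := h1
          _ ≤ M := by simp [hv]; exact h3
      linarith
    have habarball : ∀ (v : EuclideanSpace ℝ (Fin n)), ‖v‖ = 1 → ∀ ρ : ℝ, 0 ≤ ρ → ρ ≤ A + 1 →
        thirdDerivMax H p v ρ ≤ M / 6 := by
      intro v hv ρ hρ0 hρ1
      exact habarle v ρ (M/6) hρ0 (fun s h1 h2 => hptw v hv s (by rw [abs_le]; constructor <;> linarith))
    -- S₁ facts
    have hbddS₁ : BddAbove S₁ := by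
      refine ⟨‖iteratedFDeriv ℝ 1 H p‖ / lam, ?_⟩
      rintro x ⟨v, hv, rfl⟩
      exact div_le_div₀ (by positivity) (hc_bd v hv) hlam (hbge v hv)
    have hneS₁ : S₁.Nonempty := ⟨_, v₀, hv₀, rfl⟩
    have hc₁ : ∀ v : EuclideanSpace ℝ (Fin n), ‖v‖ = 1 → |c v| ≤ C₁ * b v := by
      intro v hv
      have h := le_csSup hbddS₁ (⟨v, hv, rfl⟩ : |c v| / b v ∈ S₁)
      rw [div_le_iff₀ (hbpos v hv)] at h
      linarith
    have hC₁0 : 0 ≤ C₁ :=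
      le_trans (div_nonneg (abs_nonneg _) (hbpos v₀ hv₀).le) (le_csSup hbddS₁ ⟨v₀, hv₀, rfl⟩)
    have hη₁le : η₁ ≤ 2 * C₁ := by
      rw [hη₁]
      refine csSup_le ⟨2 * |c v₀| / b v₀, ⟨v₀, hv₀, rfl⟩⟩ ?_
      rintro x ⟨v, hv, rfl⟩
      have h := le_csSup hbddS₁ (⟨v, hv, rfl⟩ : |c v| / b v ∈ S₁)
      rw [mul_div_assoc]
      linarith
    -- S₂ facts
    have hbddS₂ : BddAbove S₂ := by
      refine ⟨(M/6) / lam, ?_⟩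
      rintro x ⟨v, hv, rfl⟩
      exact div_le_div₀ (by positivity) (habarball v hv A hA0 (by linarith)) hlam (hbge v hv)
    have hc₂ : ∀ v : EuclideanSpace ℝ (Fin n), ‖v‖ = 1 → thirdDerivMax H p v A ≤ C₂ * b v := by
      intro v hv
      have h := le_csSup hbddS₂ (⟨v, hv, rfl⟩ : thirdDerivMax H p v A / b v ∈ S₂)
      rw [div_le_iff₀ (hbpos v hv)] at h
      linarith
    have hC₂0 : 0 ≤ C₂ :=
      le_trans (div_nonneg (habar0 v₀ A hA0) (hbpos v₀ hv₀).le) (le_csSup hbddS₂ ⟨v₀, hv₀, rfl⟩)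
    set θ := 2 - 9 * C₁ * C₂ with hθdef
    have hθ : 0 < θ := by rw [hθdef]; nlinarith [hC]
    set δ := θ * lam / (A + 1) with hδdef
    have hδ : 0 < δ := by rw [hδdef]; positivity
    -- uniform continuity
    have hUC0 := hK.uniformContinuousOn_of_continuous hF3c.continuousOn
    rw [Metric.uniformContinuousOn_iff] at hUC0
    obtain ⟨ε₀, hε₀, hUC⟩ := hUC0 δ hδ
    set ε := min 1 (min (ε₀/2) (θ * lam / (M + 1))) with hεdef
    have hε : 0 < ε := lt_min one_pos (lt_min (by linarith) (by positivity))
    have hε1 : ε ≤ 1 := min_le_left _ _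
    have hεε₀ : ε ≤ ε₀ / 2 := le_trans (min_le_right _ _) (min_le_left _ _)
    have hεM : ε ≤ θ * lam / (M + 1) := le_trans (min_le_right _ _) (min_le_right _ _)
    refine ⟨A + ε, by rw [hAdef] at *; linarith, ?_⟩
    intro v hv
    -- Step 1 : thirdDerivMax at A+ε bounded by value at A plus δ/6
    have hstep : thirdDerivMax H p v (A + ε) ≤ thirdDerivMax H p v A + δ / 6 := by
      apply habarle v (A + ε) _ (by linarith)
      intro s hs1 hs2
      set s' := max (-A) (min A s) with hs'def
      have hs'1 : -A ≤ s' := le_max_left _ _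
      have hs'2 : s' ≤ A := max_le (by linarith) (min_le_left _ _)
      have hss' : |s - s'| ≤ ε := by
        rw [abs_le]
        constructor
        · rcases le_total (-A) s with h | h
          · have : s' ≤ s := max_le h (min_le_right A s)
            linarith
          · have hmin : min A s = s := min_eq_right (by linarith)
            have : s' = -A := by rw [hs'def, hmin]; exact max_eq_left h
            rw [this]; linarith
        · rcases le_total s A with h | h
          · have hmin : min A s = s := min_eq_right h
            have : s ≤ s' := by rw [hs'def, hmin]; exact le_max_right _ _
            linarith
          · have hmin : min A s = A := min_eq_left h
            have : s' = A := by rw [hs'def, hmin]; exact max_eq_right (by linarith)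
            rw [this]; linarith
      have hsK : p + s • v ∈ K := hmemK v hv s (by rw [abs_le]; constructor <;> linarith)
      have hs'K : p + s' • v ∈ K := hmemK v hv s' (by rw [abs_le]; constructor <;> linarith)
      have hdist : dist (p + s • v) (p + s' • v) < ε₀ := by
        rw [dist_eq_norm]
        have heq : p + s • v - (p + s' • v) = (s - s') • v := by
          rw [sub_smul]; abel
        rw [heq, norm_smul, hv, Real.norm_eq_abs]
        rw [mul_one]
        linarith
      have hUCd := hUC _ hsK _ hs'K hdist
      rw [dist_eq_norm] at hUCd
      have e1 : |dirDeriv H 3 (p + s • v) v| ≤ |dirDeriv H 3 (p + s' • v) v| + δ := by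
        rw [hdd 3 le_rfl, hdd 3 le_rfl]
        set Fs := iteratedFDeriv ℝ 3 H (p + s • v) with hFs
        set Fs' := iteratedFDeriv ℝ 3 H (p + s' • v) with hFs'
        have h5 : ‖Fs (fun _ => v) - Fs' (fun _ => v)‖ ≤ ‖Fs - Fs'‖ := by
          rw [← ContinuousMultilinearMap.sub_apply]
          have := (Fs - Fs').le_opNorm (fun _ => v)
          simpa [hv] using this
        have h6 := abs_sub_abs_le_abs_sub (Fs (fun _ => v)) (Fs' (fun _ => v))
        rw [← Real.norm_eq_abs (Fs (fun _ => v) - Fs' (fun _ => v))] at h6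
        linarith
      have e2 := habarmem v A s' hs'1 hs'2
      linarith
    -- Step 2 : combine
    have hT := hc₂ v hv
    have hTA0 := habar0 v A hA0
    have hTM := habarball v hv A hA0 (by linarith)
    have hbv := hbge v hv
    have hA3C₁ : A ≤ 3 * C₁ := by rw [hAdef]; linarith
    have k1 : 3 * (thirdDerivMax H p v A) * A ≤ (2 - θ) * b v := by
      have := mul_le_mul hT hA3C₁ hA0 (mul_nonneg hC₂0 (hbpos v hv).le)
      rw [hθdef]
      nlinarith [hbpos v hv]
    have k2 : 3 * (thirdDerivMax H p v A) * ε ≤ θ * lam / 2 := by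
      have hM1 : ε * (M + 1) ≤ θ * lam := by
        rw [← le_div_iff₀ (by linarith : (0:ℝ) < M + 1)]
        exact hεM
      nlinarith [hε.le]
    have k3 : (δ / 2) * (A + ε) ≤ θ * lam / 2 := by
      have : δ * (A + 1) = θ * lam := by
        rw [hδdef]; field_simp
      nlinarith [hδ.le]
    have hfinal : 3 * thirdDerivMax H p v (A + ε) * (A + ε)
        ≤ 3 * (thirdDerivMax H p v A + δ / 6) * (A + ε) := by
      have hAε : 0 ≤ A + ε := by linarith
      nlinarith [hstep]
    nlinarith [hfinal, k1, k2, k3, mul_nonneg hθ.le (sub_nonneg.2 hbv)]
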